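/- If ψ : [0,π] → ℝ^{m×m} has the representation ψ(θ) = ∑_{n=0}^∞ B_n (cos θ)^n, where {B_n} is a sequence of symmetric positive semidefinite m×m matrices with ∑_n B_n summable entrywise, then the map (x,y) ↦ ψ(arccos⟨x,y⟩) is a matrix-valued positive definite function on the unit sphere S^d for every d ≥ 1. -/

import Mathlib

open Finset

private lemma key_rearrange {N : ℕ} {κ τ : Type*} [Fintype κ] [Fintype τ]
    (f : Fin N → κ → ℝ) (g : Fin N → τ → ℝ) :
    ∑ ℓ, ∑ r, (∑ k, f ℓ k * f r k) * (∑ t, g ℓ t * g r t)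
      = ∑ k, ∑ t, (∑ ℓ, f ℓ k * g ℓ t) ^ 2 := by
  calc ∑ ℓ, ∑ r, (∑ k, f ℓ k * f r k) * (∑ t, g ℓ t * g r t)
      = ∑ p : Fin N × Fin N, ∑ q : κ × τ,
          (f p.1 q.1 * g p.1 q.2) * (f p.2 q.1 * g p.2 q.2) := by
        rw [Fintype.sum_prod_type]
        refine Finset.sum_congr rfl fun ℓ _ => ?_
        refine Finset.sum_congr rfl fun r _ => ?_
        rw [Fintype.sum_prod_type, Finset.sum_mul_sum]
        exact Finset.sum_congr rfl fun k _ => Finset.sum_congr rfl fun t _ => by ring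
    _ = ∑ q : κ × τ, ∑ p : Fin N × Fin N,
          (f p.1 q.1 * g p.1 q.2) * (f p.2 q.1 * g p.2 q.2) := Finset.sum_comm
    _ = ∑ k, ∑ t, (∑ ℓ, f ℓ k * g ℓ t) ^ 2 := by
        rw [Fintype.sum_prod_type]
        refine Finset.sum_congr rfl fun k _ => Finset.sum_congr rfl fun t _ => ?_
        rw [sq, Finset.sum_mul_sum, Fintype.sum_prod_type]

open scoped MatrixOrder in
private lemma psd_eq_conjTranspose_mul_self {m : ℕ} {Bn : Matrix (Fin m) (Fin m) ℝ}
    (h : Bn.PosSemidef) : ∃ C : Matrix (Fin m) (Fin m) ℝ, Bn = Matrix.conjTranspose C * C := by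
  obtain ⟨X, hX, -, rfl⟩ := CFC.exists_sqrt_of_isSelfAdjoint_of_quasispectrumRestricts
    h.isHermitian (QuasispectrumRestricts.nnreal_of_nonneg h.nonneg)
  exact ⟨X, by rw [← Matrix.star_eq_conjTranspose, hX.star_eq]⟩

private lemma step_nonneg {m d N : ℕ} (n : ℕ) (Bn : Matrix (Fin m) (Fin m) ℝ)
    (hBn : Bn.PosSemidef) (x : Fin N → EuclideanSpace ℝ (Fin (d+1)))
    (a : Fin N → Fin m → ℝ) :
    0 ≤ ∑ ℓ, ∑ r, ∑ i, ∑ j,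
      a ℓ i * ((inner ℝ (x ℓ) (x r) : ℝ) ^ n * Bn i j) * a r j := by
  obtain ⟨C, hC⟩ : ∃ C : Matrix (Fin m) (Fin m) ℝ, Bn = Matrix.conjTranspose C * C :=
    psd_eq_conjTranspose_mul_self hBn
  have hinner : ∀ ℓ r : Fin N, (inner ℝ (x ℓ) (x r) : ℝ) ^ n
      = ∑ p : Fin n → Fin (d+1), (∏ i, x ℓ (p i)) * (∏ i, x r (p i)) := by
    intro ℓ r
    rw [PiLp.inner_apply]
    simp only [RCLike.inner_apply, conj_trivial]
    rw [Fintype.sum_pow]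
    exact Finset.sum_congr rfl fun p _ => (Finset.prod_mul_distrib.trans (mul_comm _ _))
  have hquad : ∀ ℓ r : Fin N, ∑ i, ∑ j, a ℓ i * Bn i j * a r j
      = ∑ k, (∑ i, C k i * a ℓ i) * (∑ j, C k j * a r j) := by
    intro ℓ r
    have h1 : ∀ i j : Fin m, a ℓ i * Bn i j * a r j
        = ∑ k, (C k i * a ℓ i) * (C k j * a r j) := by
      intro i j
      rw [hC]
      simp only [Matrix.mul_apply, Matrix.conjTranspose_apply, star_trivial,
        Finset.sum_mul, Finset.mul_sum]
      exact Finset.sum_congr rfl fun k _ => by ring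
    simp only [h1]
    calc ∑ i, ∑ j, ∑ k, (C k i * a ℓ i) * (C k j * a r j)
        = ∑ i, ∑ k, ∑ j, (C k i * a ℓ i) * (C k j * a r j) :=
          Finset.sum_congr rfl fun i _ => Finset.sum_comm
      _ = ∑ k, ∑ i, ∑ j, (C k i * a ℓ i) * (C k j * a r j) := Finset.sum_comm
      _ = ∑ k, (∑ i, C k i * a ℓ i) * (∑ j, C k j * a r j) :=
          Finset.sum_congr rfl fun k _ => (Finset.sum_mul_sum _ _ _ _).symm
  have hmain : ∑ ℓ, ∑ r, ∑ i, ∑ j,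
      a ℓ i * ((inner ℝ (x ℓ) (x r) : ℝ) ^ n * Bn i j) * a r j
      = ∑ ℓ, ∑ r, (∑ p : Fin n → Fin (d+1), (∏ i, x ℓ (p i)) * (∏ i, x r (p i)))
          * (∑ k, (∑ i, C k i * a ℓ i) * (∑ j, C k j * a r j)) := by
    refine Finset.sum_congr rfl fun ℓ _ => Finset.sum_congr rfl fun r _ => ?_
    rw [← hinner, ← hquad]
    rw [Finset.mul_sum]
    refine Finset.sum_congr rfl fun i _ => ?_
    rw [Finset.mul_sum]
    exact Finset.sum_congr rfl fun j _ => by ring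
  have hkey := key_rearrange (N := N) (κ := (Fin n → Fin (d+1))) (τ := Fin m)
    (fun ℓ p => ∏ i, x ℓ (p i)) (fun ℓ k => ∑ i, C k i * a ℓ i)
  rw [hmain, hkey]
  exact Finset.sum_nonneg fun p _ => Finset.sum_nonneg fun k _ => sq_nonneg _

/-- If `ψ(θ) = ∑ₙ Bₙ (cos θ)^n` with `Bₙ` symmetric positive semidefinite and
entrywise summable, then `(x,y) ↦ ψ(arccos⟨x,y⟩)` is a matrix-valued positive
definite function on the unit sphere `S^d` for every `d ≥ 1`. -/
theorem matrixPosDef_of_cos_series {m d : ℕ} (hd : 1 ≤ d)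
    (ψ : ℝ → Matrix (Fin m) (Fin m) ℝ)
    (B : ℕ → Matrix (Fin m) (Fin m) ℝ)
    (hB : ∀ n, (B n).PosSemidef)
    (hsum : ∀ i j, Summable (fun n => B n i j))
    (hrep : ∀ θ ∈ Set.Icc (0 : ℝ) Real.pi,
      ∀ i j, ψ θ i j = ∑' n, (Real.cos θ) ^ n * B n i j) :
    ∀ (N : ℕ) (x : Fin N → EuclideanSpace ℝ (Fin (d + 1))),
      (∀ ℓ, ‖x ℓ‖ = 1) →
      ∀ a : Fin N → Fin m → ℝ,
        0 ≤ ∑ ℓ, ∑ r, ∑ i, ∑ j,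
          a ℓ i * ψ (Real.arccos (inner ℝ (x ℓ) (x r))) i j * a r j := by
  intro N x hx a
  have habs : ∀ ℓ r : Fin N, |(inner ℝ (x ℓ) (x r) : ℝ)| ≤ 1 := by
    intro ℓ r
    calc |(inner ℝ (x ℓ) (x r) : ℝ)| ≤ ‖x ℓ‖ * ‖x r‖ := abs_real_inner_le_norm _ _
    _ = 1 := by rw [hx, hx]; ring
  have hψ : ∀ ℓ r : Fin N, ∀ i j,
      ψ (Real.arccos (inner ℝ (x ℓ) (x r))) i j
        = ∑' n, (inner ℝ (x ℓ) (x r) : ℝ) ^ n * B n i j := by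
    intro ℓ r i j
    rw [hrep _ ⟨Real.arccos_nonneg _, Real.arccos_le_pi _⟩ i j,
      Real.cos_arccos (neg_le_of_abs_le (habs ℓ r)) (le_of_abs_le (habs ℓ r))]
  have hs : ∀ (ℓ r : Fin N) (i j : Fin m),
      Summable (fun n => a ℓ i * ((inner ℝ (x ℓ) (x r) : ℝ) ^ n * B n i j) * a r j) := by
    intro ℓ r i j
    apply Summable.mul_right
    apply Summable.mul_left
    apply Summable.of_abs
    refine Summable.of_nonneg_of_le (fun n => abs_nonneg _) (fun n => ?_)
      (summable_abs_iff.mpr (hsum i j))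
    rw [abs_mul, abs_pow]
    calc |(inner ℝ (x ℓ) (x r) : ℝ)| ^ n * |B n i j|
        ≤ 1 * |B n i j| := by
          gcongr
          exact pow_le_one₀ (abs_nonneg _) (habs ℓ r)
    _ = |B n i j| := one_mul _
  simp only [hψ, ← tsum_mul_left, ← tsum_mul_right]
  rw [show (∑ ℓ, ∑ r, ∑ i, ∑ j, ∑' n,
      a ℓ i * ((inner ℝ (x ℓ) (x r) : ℝ) ^ n * B n i j) * a r j)
      = ∑' n, ∑ ℓ, ∑ r, ∑ i, ∑ j,
        a ℓ i * ((inner ℝ (x ℓ) (x r) : ℝ) ^ n * B n i j) * a r j from by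
    rw [Summable.tsum_finsetSum fun ℓ _ => summable_sum fun r _ => summable_sum fun i _ =>
      summable_sum fun j _ => hs ℓ r i j]
    refine Finset.sum_congr rfl fun ℓ _ => ?_
    rw [Summable.tsum_finsetSum fun r _ => summable_sum fun i _ => summable_sum fun j _ => hs ℓ r i j]
    refine Finset.sum_congr rfl fun r _ => ?_
    rw [Summable.tsum_finsetSum fun i _ => summable_sum fun j _ => hs ℓ r i j]
    refine Finset.sum_congr rfl fun i _ => ?_
    rw [Summable.tsum_finsetSum fun j _ => hs ℓ r i j]]
  exact tsum_nonneg fun n => step_nonneg n (B n) (hB n) x a
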